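/- Strong duality for the total-variation uncertainty set (truncation form): Let S be a finite nonempty set, p a pmf on S, v : S → ℝ with v(s) ≥ 0 for all s, and σ ∈ [0,1]. Then inf{ E_q[v] : q a pmf on S with (1/2)·∑_{s∈S}|q(s) − p(s)| ≤ σ } = sup_{α ≥ 0} { E_p[(v)_α] − σ·( α − min_{s∈S} v(s) ) }. -/

import Mathlib

open Finset

/-- `p` is a probability mass function on the finite nonempty type `S`. -/
def IsPmf {S : Type*} [Fintype S] (p : S → ℝ) : Prop :=
  (∀ s, 0 ≤ p s) ∧ ∑ s, p s = 1

/-- Strong duality for the total-variation uncertainty set (truncation form). -/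
theorem tv_strong_duality_truncation
    {S : Type*} [Fintype S] [Nonempty S]
    (p : S → ℝ) (hp : IsPmf p)
    (v : S → ℝ) (hv : ∀ s, 0 ≤ v s)
    (σ : ℝ) (hσ0 : 0 ≤ σ) (hσ1 : σ ≤ 1) :
    sInf {x : ℝ | ∃ q : S → ℝ, IsPmf q ∧
        (1 / 2) * (∑ s, |q s - p s|) ≤ σ ∧ x = ∑ s, q s * v s}
      =
    sSup {x : ℝ | ∃ α : ℝ, 0 ≤ α ∧
        x = (∑ s, p s * min (v s) α) - σ * (α - ⨅ s, v s)} := by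
  classical
  obtain ⟨s₀, hs₀⟩ : ∃ s₀ : S, ∀ s, v s₀ ≤ v s := Finite.exists_min v
  have hm : (⨅ s, v s) = v s₀ :=
    le_antisymm (ciInf_le (Finite.bddBelow_range v) s₀) (le_ciInf hs₀)
  rw [hm]
  set m := v s₀ with hmdef
  set P : Set ℝ := {x : ℝ | ∃ q : S → ℝ, IsPmf q ∧
      (1 / 2) * (∑ s, |q s - p s|) ≤ σ ∧ x = ∑ s, q s * v s} with hP
  set D : Set ℝ := {x : ℝ | ∃ α : ℝ, 0 ≤ α ∧
      x = (∑ s, p s * min (v s) α) - σ * (α - m)} with hD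
  -- weak duality
  have weak : ∀ x ∈ P, ∀ y ∈ D, y ≤ x := by
    rintro x ⟨q, hq, hqtv, rfl⟩ y ⟨α, hα0, rfl⟩
    have hqm : m ≤ ∑ s, q s * v s := by
      calc m = ∑ s, q s * m := by rw [← Finset.sum_mul, hq.2, one_mul]
        _ ≤ _ := Finset.sum_le_sum fun s _ =>
            mul_le_mul_of_nonneg_left (hs₀ s) (hq.1 s)
    rcases le_total α m with h | h
    · have hmin : ∀ s, min (v s) α = α := fun s => min_eq_right (h.trans (hs₀ s))
      simp only [hmin, ← Finset.sum_mul, hp.2, one_mul]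
      nlinarith
    · -- main case m ≤ α
      have hdsum : ∑ s, (q s - p s) = 0 := by
        rw [Finset.sum_sub_distrib, hq.2, hp.2, sub_self]
      have habs : ∑ s, max (q s - p s) 0 ≤ σ := by
        have h1 : ∀ s : S, max (q s - p s) 0 = ((q s - p s) + |q s - p s|) / 2 := by
          intro s
          rcases le_total (q s - p s) 0 with h2 | h2
          · rw [max_eq_right h2, abs_of_nonpos h2]; ring
          · rw [max_eq_left h2, abs_of_nonneg h2]; ring
        calc ∑ s, max (q s - p s) 0
            = ((∑ s, (q s - p s)) + ∑ s, |q s - p s|) / 2 := by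
              simp only [h1]
              rw [← Finset.sum_add_distrib, ← Finset.sum_div]
          _ ≤ σ := by rw [hdsum]; linarith
      have key : ∀ s : S, (p s - q s) * (min (v s) α - α) ≤ max (q s - p s) 0 * (α - m) := by
        intro s
        have hf1 : min (v s) α ≤ α := min_le_right _ _
        have hf2 : m ≤ min (v s) α := le_min (hs₀ s) h
        rcases le_total (q s - p s) 0 with h2 | h2
        · rw [max_eq_right h2]
          nlinarith
        · rw [max_eq_left h2]
          nlinarith
      have hsum1 : ∑ s, (p s - q s) * (min (v s) α - α) ≤ σ * (α - m) := by
        calc ∑ s, (p s - q s) * (min (v s) α - α)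
            ≤ ∑ s, max (q s - p s) 0 * (α - m) := Finset.sum_le_sum fun s _ => key s
          _ = (∑ s, max (q s - p s) 0) * (α - m) := by rw [Finset.sum_mul]
          _ ≤ σ * (α - m) := by
              apply mul_le_mul_of_nonneg_right habs; linarith
      have hsum2 : ∑ s, (p s - q s) * (min (v s) α - α)
          = (∑ s, p s * min (v s) α) - ∑ s, q s * min (v s) α := by
        have hdsum' : ∑ s, (p s - q s) = 0 := by
          rw [Finset.sum_sub_distrib, hq.2, hp.2, sub_self]
        have h0 : (∑ s, (p s - q s) * α) = 0 := by
          rw [← Finset.sum_mul, hdsum', zero_mul]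
        calc ∑ s, (p s - q s) * (min (v s) α - α)
            = ∑ s, ((p s * min (v s) α - q s * min (v s) α) - (p s - q s) * α) :=
              Finset.sum_congr rfl fun s _ => by ring
          _ = (∑ s, (p s * min (v s) α - q s * min (v s) α))
              - ∑ s, (p s - q s) * α := Finset.sum_sub_distrib _ _
          _ = _ := by rw [h0, Finset.sum_sub_distrib, sub_zero]
      have hqf : ∑ s, q s * min (v s) α ≤ ∑ s, q s * v s :=
        Finset.sum_le_sum fun s _ =>
          mul_le_mul_of_nonneg_left (min_le_left _ _) (hq.1 s)
      linarith [hsum2 ▸ hsum1]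
  -- primal nonempty (q = p)
  have hPne : (∑ s, p s * v s) ∈ P := by
    exact ⟨p, hp, by simpa using hσ0, rfl⟩
  -- dual nonempty (α = 0)
  have hDne : (σ * m) ∈ D := by
    refine ⟨0, le_refl 0, ?_⟩
    have : ∀ s : S, min (v s) 0 = 0 := fun s => min_eq_right (hv s)
    simp [this]
  -- strong part: construct optimal q and α with equal values
  set G : ℝ → ℝ := fun β => ∑ s, if β < v s then p s else 0 with hGdef
  have hG0 : ∀ β, 0 ≤ G β := fun β =>
    Finset.sum_nonneg fun s _ => by split <;> simp [hp.1 s]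
  set T : Finset S := univ.filter (fun s => G (v s) ≤ σ) with hT
  have hTne : T.Nonempty := by
    obtain ⟨sM, hsM⟩ := Finite.exists_max v
    refine ⟨sM, Finset.mem_filter.mpr ⟨Finset.mem_univ _, ?_⟩⟩
    have : G (v sM) = 0 := Finset.sum_eq_zero fun s _ => by
      rw [if_neg (not_lt.mpr (hsM s))]
    rw [this]; exact hσ0
  obtain ⟨t, htT, htmin⟩ := T.exists_min_image v hTne
  set α : ℝ := v t with hαdef
  have hGσ : G α ≤ σ := (Finset.mem_filter.mp htT).2
  have hα0 : 0 ≤ α := hv t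
  have hmα : m ≤ α := hs₀ t
  set Pge : ℝ := ∑ s, if α ≤ v s then p s else 0 with hPgedef
  have hσPge : σ ≤ Pge := by
    by_cases hc : ∀ s, α ≤ v s
    · have : Pge = 1 := by
        rw [hPgedef, ← hp.2]
        exact Finset.sum_congr rfl fun s _ => if_pos (hc s)
      rw [this]; exact hσ1
    · push_neg at hc
      obtain ⟨s₁, hs₁⟩ := hc
      obtain ⟨s₂, hs₂mem, hs₂max⟩ :=
        (univ.filter (fun s => v s < α)).exists_max_image v
          ⟨s₁, Finset.mem_filter.mpr ⟨Finset.mem_univ _, hs₁⟩⟩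
      have hs₂lt : v s₂ < α := (Finset.mem_filter.mp hs₂mem).2
      have hs₂T : s₂ ∉ T := fun hmem => absurd (htmin s₂ hmem) (not_le.mpr hs₂lt)
      have hs₂G : σ < G (v s₂) := by
        by_contra hcon
        exact hs₂T (Finset.mem_filter.mpr ⟨Finset.mem_univ _, not_lt.mp hcon⟩)
      have hle : G (v s₂) ≤ Pge := by
        apply Finset.sum_le_sum
        intro s _
        by_cases h3 : v s₂ < v s
        · rw [if_pos h3]
          have : α ≤ v s := by
            by_contra h4
            exact absurd (hs₂max s (Finset.mem_filter.mpr
              ⟨Finset.mem_univ _, not_le.mp h4⟩)) (not_le.mpr h3)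
          rw [if_pos this]
        · rw [if_neg h3]
          split <;> simp [hp.1 s]
      linarith
  set M : ℝ := ∑ s, if v s = α then p s else 0 with hMdef
  have hM0 : 0 ≤ M := Finset.sum_nonneg fun s _ => by split <;> simp [hp.1 s]
  have hPgeGM : Pge = G α + M := by
    rw [hPgedef, hGdef, hMdef, ← Finset.sum_add_distrib]
    refine Finset.sum_congr rfl fun s _ => ?_
    rcases lt_trichotomy α (v s) with h | h | h
    · rw [if_pos h.le, if_pos h, if_neg (by linarith), add_zero]
    · rw [if_pos (le_of_eq h), if_neg (by linarith), if_pos h.symm, zero_add]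
    · rw [if_neg (not_le.mpr h), if_neg (by linarith), if_neg (by linarith), add_zero]
  set e : ℝ := σ - G α with hedef
  have he0 : 0 ≤ e := by rw [hedef]; linarith
  have heM : e ≤ M := by rw [hedef]; linarith [hσPge, hPgeGM]
  have heMM : e / M * M = e := by
    by_cases hM : M = 0
    · have : e = 0 := le_antisymm (heM.trans_eq hM) he0
      simp [this]
    · exact div_mul_cancel₀ e hM
  set w : S → ℝ := fun s => if α < v s then 1 else if v s = α then e / M else 0
    with hwdef
  have hw0 : ∀ s, 0 ≤ w s := by
    intro s; rw [hwdef]; dsimp only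
    split
    · exact zero_le_one
    · split
      · exact div_nonneg he0 hM0
      · exact le_refl 0
  have hw1 : ∀ s, w s ≤ 1 := by
    intro s; rw [hwdef]; dsimp only
    split
    · exact le_refl 1
    · have hdiv : e / M ≤ 1 := by
        by_cases hM : M = 0
        · have : e = 0 := le_antisymm (heM.trans_eq hM) he0
          simp [this]
        · exact (div_le_one (lt_of_le_of_ne hM0 (Ne.symm hM))).mpr heM
      split
      · exact hdiv
      · exact zero_le_one
  have hpw : ∑ s, p s * w s = σ := by
    have hpoint : ∀ s : S, p s * w s
        = (if α < v s then p s else 0) + (e / M) * (if v s = α then p s else 0) := by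
      intro s; rw [hwdef]; dsimp only
      rcases lt_trichotomy α (v s) with h | h | h
      · rw [if_pos h, if_pos h, if_neg (by linarith)]; ring
      · rw [if_neg (by linarith), if_pos h.symm, if_neg (by linarith), if_pos h.symm]
        ring
      · rw [if_neg (by linarith), if_neg (by linarith), if_neg (by linarith),
          if_neg (by linarith)]
        ring
    calc ∑ s, p s * w s
        = (∑ s, if α < v s then p s else 0)
          + (e / M) * ∑ s, (if v s = α then p s else 0) := by
          simp only [hpoint]
          rw [Finset.sum_add_distrib, Finset.mul_sum]
      _ = G α + e := by
          rw [show G α = ∑ s, if α < v s then p s else 0 from rfl, ← hMdef, heMM]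
      _ = σ := by rw [hedef]; ring
  have hpw0 : ∀ s, 0 ≤ p s * w s := fun s => mul_nonneg (hp.1 s) (hw0 s)
  have hps₀ : p s₀ * w s₀ ≤ σ := by
    rw [← hpw]
    exact Finset.single_le_sum (fun s _ => hpw0 s) (Finset.mem_univ s₀)
  set q : S → ℝ := fun s => p s * (1 - w s) + (if s = s₀ then σ else 0) with hqdef
  have hq : IsPmf q := by
    constructor
    · intro s
      apply add_nonneg (mul_nonneg (hp.1 s) (by linarith [hw1 s]))
      split <;> simp [hσ0]
    · have : ∀ s : S, q s = (p s - p s * w s) + (if s = s₀ then σ else 0) := by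
        intro s; rw [hqdef]; ring_nf
      simp only [this]
      rw [Finset.sum_add_distrib, Finset.sum_sub_distrib, hp.2, hpw,
        Finset.sum_ite_eq' univ s₀ (fun _ => σ), if_pos (Finset.mem_univ s₀)]
      ring
  have hqtv : (1 / 2) * (∑ s, |q s - p s|) ≤ σ := by
    have hpoint : ∀ s : S, |q s - p s|
        = p s * w s + (if s = s₀ then σ - 2 * (p s₀ * w s₀) else 0) := by
      intro s
      by_cases h : s = s₀
      · subst h
        rw [if_pos rfl]
        have h1 : q s - p s = σ - p s * w s := by rw [hqdef]; simp; ring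
        rw [h1, abs_of_nonneg (by linarith)]
        ring
      · rw [if_neg h]
        have h1 : q s - p s = -(p s * w s) := by rw [hqdef]; simp [h]; ring
        rw [h1, abs_neg, abs_of_nonneg (hpw0 s), add_zero]
    simp only [hpoint]
    rw [Finset.sum_add_distrib, hpw,
      Finset.sum_ite_eq' univ s₀ (fun _ => σ - 2 * (p s₀ * w s₀)),
      if_pos (Finset.mem_univ s₀)]
    linarith [hpw0 s₀]
  set X : ℝ := ∑ s, q s * v s with hXdef
  have hXP : X ∈ P := ⟨q, hq, hqtv, rfl⟩
  have hXD : X ∈ D := by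
    refine ⟨α, hα0, ?_⟩
    have hpoint : ∀ s : S, q s * v s
        = (p s * min (v s) α - α * (p s * w s)) + (if s = s₀ then σ * v s else 0) := by
      intro s
      have : q s * v s = p s * (1 - w s) * v s + (if s = s₀ then σ else 0) * v s := by
        rw [hqdef]; ring
      rw [this]
      congr 1
      · rw [hwdef]; dsimp only
        rcases lt_trichotomy α (v s) with h | h | h
        · rw [if_pos h, min_eq_right h.le]; ring
        · rw [if_neg (by linarith), if_pos h.symm, min_eq_left h.ge, h]; ring
        · rw [if_neg (by linarith), if_neg (by linarith), min_eq_left h.le]; ring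
      · split <;> ring
    rw [hXdef]
    simp only [hpoint]
    rw [Finset.sum_add_distrib, Finset.sum_sub_distrib, ← Finset.mul_sum, hpw,
      Finset.sum_ite_eq' univ s₀ (fun s => σ * v s), if_pos (Finset.mem_univ s₀),
      ← hmdef]
    ring
  -- conclude
  have hDbdd : BddAbove D := ⟨∑ s, p s * v s, fun y hy => weak _ hPne y hy⟩
  have hPbdd : BddBelow P := ⟨σ * m, fun x hx => weak x hx _ hDne⟩
  apply le_antisymm
  · calc sInf P ≤ X := csInf_le hPbdd hXP
      _ ≤ sSup D := le_csSup hDbdd hXD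
  · exact le_csInf ⟨_, hPne⟩ fun x hx => csSup_le ⟨_, hDne⟩ fun y hy => weak x hx y hy
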